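/- Let P_0, …, P_9 be a symmetric Clifford system on ℝ^{32} and let x ∈ ℝ^{32} be a unit vector which is a common eigenvector of all the operators P_{2i}P_{2i+1}P_{2j}P_{2j+1}, 0 ≤ i < j ≤ 4 (each with eigenvalue ±1). Then the dimension of the linear span of the 45 vectors {P_i P_j x : 0 ≤ i < j ≤ 9} is at most 21. -/

import Mathlib

open Matrix

private lemma cliff_aux {R : Type*} [Ring R] (A B C D : R)
    (hA : A * A = 1) (hB : B * B = 1) (hC : C * C = 1) (hD : D * D = 1)
    (hBA : B * A = -(A * B)) (hCA : C * A = -(A * C)) (hCB : C * B = -(B * C))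
    (hDA : D * A = -(A * D)) (hDB : D * B = -(B * D)) (hDC : D * C = -(C * D)) :
    (A * B) * (A * B * C * D) = -(C * D)
      ∧ (A * C) * (A * B * C * D) = B * D
      ∧ (A * D) * (A * B * C * D) = -(B * C) := by
  have hA' : ∀ X : R, A * (A * X) = X := fun X => by rw [← mul_assoc, hA, one_mul]
  have hC' : ∀ X : R, C * (C * X) = X := fun X => by rw [← mul_assoc, hC, one_mul]
  have hBA' : ∀ X : R, B * (A * X) = -(A * (B * X)) := fun X => by
    rw [← mul_assoc, hBA, neg_mul, mul_assoc]
  have hCA' : ∀ X : R, C * (A * X) = -(A * (C * X)) := fun X => by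
    rw [← mul_assoc, hCA, neg_mul, mul_assoc]
  have hCB' : ∀ X : R, C * (B * X) = -(B * (C * X)) := fun X => by
    rw [← mul_assoc, hCB, neg_mul, mul_assoc]
  have hDA' : ∀ X : R, D * (A * X) = -(A * (D * X)) := fun X => by
    rw [← mul_assoc, hDA, neg_mul, mul_assoc]
  have hDB' : ∀ X : R, D * (B * X) = -(B * (D * X)) := fun X => by
    rw [← mul_assoc, hDB, neg_mul, mul_assoc]
  refine ⟨?_, ?_, ?_⟩
  · simp only [mul_assoc]
    rw [hBA', mul_neg, hA']
    rw [← mul_assoc B B, hB, one_mul]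
  · simp only [mul_assoc]
    rw [hCA', mul_neg, hA', hCB', neg_neg, hC']
  · simp only [mul_assoc]
    have hDC' : ∀ X : R, D * (C * X) = -(C * (D * X)) := fun X => by
      rw [← mul_assoc, hDC, neg_mul, mul_assoc]
    rw [hDA', mul_neg, hA', hDB', neg_neg, hDC', mul_neg, hD, mul_one]

def qe (a : Fin 5) : Fin 10 := ⟨2 * a.val, by have h4 : a.val ≤ 4 := (by omega); omega⟩
def qo (a : Fin 5) : Fin 10 := ⟨2 * a.val + 1, by have h4 : a.val ≤ 4 := (by omega); omega⟩

lemma qe_val (a : Fin 5) : (qe a).val = 2 * a.val := rfl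
lemma qo_val (a : Fin 5) : (qo a).val = 2 * a.val + 1 := rfl

lemma qe_ne_qo (a b : Fin 5) : qe a ≠ qo b := by
  intro h; have := congrArg Fin.val h; rw [qe_val, qo_val] at this; omega

lemma qo_ne_qe (a b : Fin 5) : qo a ≠ qe b := by
  intro h; have := congrArg Fin.val h; rw [qe_val, qo_val] at this; omega

lemma qe_ne_qe {a b : Fin 5} (h : a ≠ b) : qe a ≠ qe b := by
  intro hh; have := congrArg Fin.val hh; rw [qe_val, qe_val] at this
  exact h (Fin.ext (by omega))

lemma qo_ne_qo {a b : Fin 5} (h : a ≠ b) : qo a ≠ qo b := by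
  intro hh; have := congrArg Fin.val hh; rw [qo_val, qo_val] at this
  exact h (Fin.ext (by omega))

/-- For a symmetric Clifford system `P_0, …, P_9` on `ℝ^{32}` and
a unit vector `x` which is a common eigenvector (with eigenvalues `±1`) of all
the operators `P_{2i} P_{2i+1} P_{2j} P_{2j+1}` (`0 ≤ i < j ≤ 4`), the span of
the 45 vectors `P_i P_j x` (`0 ≤ i < j ≤ 9`) has dimension at most 21. -/
theorem fkm_96_span_dim_le_21
    (P : Fin 10 → Matrix (Fin 32) (Fin 32) ℝ)
    (hsymm : ∀ i, (P i).IsSymm)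
    (hcliff : ∀ i j, P i * P j + P j * P i =
      if i = j then (2 : Matrix (Fin 32) (Fin 32) ℝ) else 0)
    (x : Fin 32 → ℝ) (hx : x ⬝ᵥ x = 1)
    (heig : ∀ i j : Fin 5, i < j → ∃ ε : ℝ, (ε = 1 ∨ ε = -1) ∧
      (P ⟨2 * i.val, by have := i.isLt; omega⟩ *
       P ⟨2 * i.val + 1, by have := i.isLt; omega⟩ *
       P ⟨2 * j.val, by have := j.isLt; omega⟩ *
       P ⟨2 * j.val + 1, by have := j.isLt; omega⟩).mulVec x = ε • x) :
    Module.finrank ℝ ↥(Submodule.span ℝ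
      {v : Fin 32 → ℝ | ∃ i j : Fin 10, i < j ∧ v = (P i * P j).mulVec x}) ≤ 21 := by
  classical
  have hsq : ∀ i, P i * P i = 1 := by
    intro i
    have h := hcliff i i
    rw [if_pos rfl] at h
    have h2 : (2:ℝ) • (P i * P i) = (2:ℝ) • (1 : Matrix (Fin 32) (Fin 32) ℝ) := by
      rw [two_smul, two_smul, h]
      norm_num
    exact smul_right_injective _ (by norm_num : (2:ℝ) ≠ 0) h2
  have hanti : ∀ i j : Fin 10, i ≠ j → P i * P j = -(P j * P i) := by
    intro i j h
    have h1 := hcliff i j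
    rw [if_neg h] at h1
    exact eq_neg_of_add_eq_zero_left h1
  let g : (Unit ⊕ ({p : Fin 5 × Fin 5 // p.1 < p.2} × Bool)) → (Fin 32 → ℝ) := fun k =>
    match k with
    | Sum.inl _ => (P (qe 0) * P (qo 0)).mulVec x
    | Sum.inr (⟨(a, b), _⟩, false) => (P (qe a) * P (qe b)).mulVec x
    | Sum.inr (⟨(a, b), _⟩, true) => (P (qe a) * P (qo b)).mulVec x
  set W := Submodule.span ℝ (Set.range g) with hWdef
  have key : ∀ a b : Fin 5, a < b → ∃ ε : ℝ, (ε = 1 ∨ ε = -1) ∧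
      (P (qe a) * P (qo a) * P (qe b) * P (qo b)).mulVec x = ε • x :=
    fun a b hab => heig a b hab
  have ids : ∀ a b : Fin 5, a < b →
      ((P (qe a) * P (qo a)) * (P (qe a) * P (qo a) * P (qe b) * P (qo b))
          = -(P (qe b) * P (qo b))
      ∧ (P (qe a) * P (qe b)) * (P (qe a) * P (qo a) * P (qe b) * P (qo b))
          = P (qo a) * P (qo b)
      ∧ (P (qe a) * P (qo b)) * (P (qe a) * P (qo a) * P (qe b) * P (qo b))
          = -(P (qo a) * P (qe b))) := by
    intro a b hab
    have hne : a ≠ b := ne_of_lt hab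
    exact cliff_aux _ _ _ _ (hsq _) (hsq _) (hsq _) (hsq _)
      (hanti _ _ (qo_ne_qe a a)) (hanti _ _ (qe_ne_qe hne.symm))
      (hanti _ _ (qe_ne_qo b a)) (hanti _ _ (qo_ne_qe b a))
      (hanti _ _ (qo_ne_qo hne.symm)) (hanti _ _ (qo_ne_qe b b))
  have step : ∀ (C N : Matrix (Fin 32) (Fin 32) ℝ) (a b : Fin 5), a < b →
      (C * (P (qe a) * P (qo a) * P (qe b) * P (qo b)) = N ∨
       C * (P (qe a) * P (qo a) * P (qe b) * P (qo b)) = -N) →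
      C.mulVec x ∈ W → N.mulVec x ∈ W := by
    intro C N a b hab hid hC
    obtain ⟨ε, -, hM⟩ := key a b hab
    have h1 : (C * (P (qe a) * P (qo a) * P (qe b) * P (qo b))).mulVec x
        = ε • C.mulVec x := by
      rw [← Matrix.mulVec_mulVec, hM, Matrix.mulVec_smul]
    rcases hid with h | h
    · rw [h] at h1; rw [h1]; exact W.smul_mem _ hC
    · rw [h, Matrix.neg_mulVec] at h1
      have h2 : N.mulVec x = (-ε) • C.mulVec x := by
        rw [neg_smul, ← h1, neg_neg]
      rw [h2]; exact W.smul_mem _ hC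
  have base0 : (P (qe 0) * P (qo 0)).mulVec x ∈ W :=
    Submodule.subset_span ⟨Sum.inl (), rfl⟩
  have baseF : ∀ {a b : Fin 5}, a < b → (P (qe a) * P (qe b)).mulVec x ∈ W :=
    fun {a b} h => Submodule.subset_span ⟨Sum.inr (⟨(a, b), h⟩, false), rfl⟩
  have baseT : ∀ {a b : Fin 5}, a < b → (P (qe a) * P (qo b)).mulVec x ∈ W :=
    fun {a b} h => Submodule.subset_span ⟨Sum.inr (⟨(a, b), h⟩, true), rfl⟩
  have memDiag : ∀ a : Fin 5, (P (qe a) * P (qo a)).mulVec x ∈ W := by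
    intro a
    rcases eq_or_ne a 0 with rfl | h
    · exact base0
    · have h0 : (0 : Fin 5) < a := Fin.pos_of_ne_zero h
      exact step _ _ 0 a h0 (Or.inr (ids 0 a h0).1) base0
  have memOO : ∀ {a b : Fin 5}, a < b → (P (qo a) * P (qo b)).mulVec x ∈ W :=
    fun {a b} h => step _ _ a b h (Or.inl (ids a b h).2.1) (baseF h)
  have memOE : ∀ {a b : Fin 5}, a < b → (P (qo a) * P (qe b)).mulVec x ∈ W :=
    fun {a b} h => step _ _ a b h (Or.inr (ids a b h).2.2) (baseT h)
  have hsub : {v : Fin 32 → ℝ | ∃ i j : Fin 10, i < j ∧ v = (P i * P j).mulVec x}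
      ⊆ ↑W := by
    rintro v ⟨i, j, hij, rfl⟩
    have hi10 : i.val < 10 := i.isLt
    have hj10 : j.val < 10 := j.isLt
    have hij' : i.val < j.val := hij
    set a : Fin 5 := ⟨i.val / 2, by omega⟩ with ha
    set b : Fin 5 := ⟨j.val / 2, by omega⟩ with hb
    have hav : a.val = i.val / 2 := rfl
    have hbv : b.val = j.val / 2 := rfl
    by_cases hab : a.val = b.val
    · have h1 : i = qe a := Fin.ext (by rw [qe_val, hav]; omega)
      have h2 : j = qo a := Fin.ext (by rw [qo_val, hav]; omega)
      rw [h1, h2]; exact memDiag a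
    · have hab2 : a < b := by rw [Fin.lt_def]; omega
      have hi2 : i.val % 2 = 0 ∨ i.val % 2 = 1 := by omega
      have hj2 : j.val % 2 = 0 ∨ j.val % 2 = 1 := by omega
      rcases hi2 with hi2 | hi2 <;> rcases hj2 with hj2 | hj2
      · rw [show i = qe a from Fin.ext (by rw [qe_val, hav]; omega),
            show j = qe b from Fin.ext (by rw [qe_val, hbv]; omega)]
        exact baseF hab2
      · rw [show i = qe a from Fin.ext (by rw [qe_val, hav]; omega),
            show j = qo b from Fin.ext (by rw [qo_val, hbv]; omega)]
        exact baseT hab2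
      · rw [show i = qo a from Fin.ext (by rw [qo_val, hav]; omega),
            show j = qe b from Fin.ext (by rw [qe_val, hbv]; omega)]
        exact memOE hab2
      · rw [show i = qo a from Fin.ext (by rw [qo_val, hav]; omega),
            show j = qo b from Fin.ext (by rw [qo_val, hbv]; omega)]
        exact memOO hab2
  have hle : Submodule.span ℝ
      {v : Fin 32 → ℝ | ∃ i j : Fin 10, i < j ∧ v = (P i * P j).mulVec x} ≤ W :=
    Submodule.span_le.mpr hsub
  have h21 : Module.finrank ℝ ↥W ≤ 21 := by
    have h := finrank_range_le_card (R := ℝ) g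
    rw [Set.finrank] at h
    have hcard : Fintype.card (Unit ⊕ ({p : Fin 5 × Fin 5 // p.1 < p.2} × Bool)) = 21 := by
      decide
    rw [hcard] at h
    exact h
  exact le_trans (Submodule.finrank_mono hle) h21
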